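/- Let L ∈ ℝ^{k×n}, N ∈ ℝ^{n×(mn)}, H ∈ ℝ^{n×m}, A ∈ ℝ^{m×n}, b ∈ ℝ^m, and let M_S ∈ ℝ^{(mn)×q}, a ∈ ℝ^q be such that vec(A) = M_S a and |vec(A)| = |M_S| |a| (entrywise). Then ‖ |L N M_S| |a| + |L H| |b| ‖_∞ ≤ ‖ |L N| vec(|A|) + |L H| |b| ‖_∞, i.e., the structured mixed condition number expression is bounded above by the unstructured one. -/

import Mathlib

/-- The structured mixed condition number expression is bounded above by the
unstructured one: if `vec(A) = M_S a` and `|vec(A)| = |M_S||a|` entrywise, then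
`‖ |L N M_S| |a| + |L H| |b| ‖_∞ ≤ ‖ |L N| vec(|A|) + |L H| |b| ‖_∞`. -/
theorem structured_le_unstructured_condition (m n k q : ℕ)
    (L : Matrix (Fin k) (Fin n) ℝ)
    (N : Matrix (Fin n) (Fin m × Fin n) ℝ) (H : Matrix (Fin n) (Fin m) ℝ)
    (A : Matrix (Fin m) (Fin n) ℝ) (b : Fin m → ℝ)
    (MS : Matrix (Fin m × Fin n) (Fin q) ℝ) (a : Fin q → ℝ)
    (hvec : (fun p : Fin m × Fin n => A p.1 p.2) = MS.mulVec a)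
    (habs : ∀ p : Fin m × Fin n, |A p.1 p.2| = ∑ l, |MS p l| * |a l|) :
    (⨆ i : Fin k,
        ((∑ l, |(L * N * MS) i l| * |a l|) + ∑ j, |(L * H) i j| * |b j|)) ≤
      ⨆ i : Fin k,
        ((∑ p : Fin m × Fin n, |(L * N) i p| * |A p.1 p.2|)
          + ∑ j, |(L * H) i j| * |b j|) := by
  apply ciSup_mono (Set.Finite.bddAbove (Set.finite_range _))
  intro i
  apply add_le_add_left
  calc ∑ l, |(L * N * MS) i l| * |a l|
      ≤ ∑ l, (∑ p, |(L * N) i p| * |MS p l|) * |a l| := by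
        apply Finset.sum_le_sum
        intro l _
        apply mul_le_mul_of_nonneg_right _ (abs_nonneg _)
        rw [Matrix.mul_apply]
        calc |∑ p, (L * N) i p * MS p l| ≤ ∑ p, |(L * N) i p * MS p l| :=
              Finset.abs_sum_le_sum_abs _ _
          _ = ∑ p, |(L * N) i p| * |MS p l| := by simp [abs_mul]
    _ = ∑ p, |(L * N) i p| * |A p.1 p.2| := by
        simp_rw [Finset.sum_mul]
        rw [Finset.sum_comm]
        apply Finset.sum_congr rfl
        intro p _
        rw [habs p, Finset.mul_sum]
        simp [mul_assoc]
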